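/- Let ζ_1, ..., ζ_n be pairwise distinct complex numbers, all avoiding the set A = {a_0, ..., a_p} of pairwise distinct points, and suppose that for each k = 1, ..., n, 2·∑_{j≠k} 1/(ζ_k - ζ_j) + B(ζ_k)/A(ζ_k) = 0, where A(z) = ∏_{i=0}^p (z - a_i) and B is a polynomial of degree at most p. Then there exists a polynomial V of degree at most p - 1 such that y(z) = ∏_{k=1}^n (z - ζ_k) satisfies A(z)y''(z) + B(z)y'(z) = V(z)y(z). -/

import Mathlib

open Polynomial Finset

lemma deriv_prod_X_sub_C_aux {ι : Type*} [DecidableEq ι] (s : Finset ι) (f : ι → ℂ) :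
    Polynomial.derivative (∏ j ∈ s, (Polynomial.X - Polynomial.C (f j)))
      = ∑ j ∈ s, ∏ l ∈ s.erase j, (Polynomial.X - Polynomial.C (f l)) := by
  induction s using Finset.induction_on with
  | empty => simp
  | @insert i s hi ih =>
    rw [Finset.prod_insert hi, derivative_mul, ih, Finset.sum_insert hi, Finset.erase_insert hi]
    simp only [derivative_sub, derivative_X, derivative_C, sub_zero, one_mul]
    rw [Finset.mul_sum]
    congr 1
    refine Finset.sum_congr rfl fun j hj => ?_
    rw [Finset.erase_insert_of_ne (by rintro rfl; exact hi hj),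
      Finset.prod_insert (fun h => hi (Finset.mem_of_mem_erase h))]

theorem stmt_4 (p n : ℕ) (a : Fin (p + 1) → ℂ) (ha : Function.Injective a)
    (ζ : Fin n → ℂ) (hζ : Function.Injective ζ) (hζa : ∀ k m, ζ k ≠ a m)
    (A B : Polynomial ℂ) (hA : A = ∏ i, (Polynomial.X - Polynomial.C (a i)))
    (hB : B.degree ≤ p)
    (hcrit : ∀ k : Fin n,
      2 * ∑ j ∈ Finset.univ.erase k, 1 / (ζ k - ζ j)
        + B.eval (ζ k) / A.eval (ζ k) = 0) :
    ∃ V : Polynomial ℂ, V.degree ≤ (p - 1 : ℕ) ∧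
      A * Polynomial.derivative (Polynomial.derivative (∏ k, (Polynomial.X - Polynomial.C (ζ k))))
        + B * Polynomial.derivative (∏ k, (Polynomial.X - Polynomial.C (ζ k)))
      = V * ∏ k, (Polynomial.X - Polynomial.C (ζ k)) := by
  set y : Polynomial ℂ := ∏ k, (X - C (ζ k)) with hy
  set W : Polynomial ℂ := A * derivative (derivative y) + B * derivative y with hW
  have hAne : ∀ k : Fin n, A.eval (ζ k) ≠ 0 := by
    intro k
    rw [hA, eval_prod, Finset.prod_ne_zero_iff]
    intro i _
    simp only [eval_sub, eval_X, eval_C]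
    exact sub_ne_zero.mpr (hζa k i)
  -- each ζ k is a root of W
  have hroot : ∀ k : Fin n, W.eval (ζ k) = 0 := by
    intro k
    set q : Polynomial ℂ := ∏ j ∈ Finset.univ.erase k, (X - C (ζ j)) with hq
    have hyq : y = (X - C (ζ k)) * q := (Finset.mul_prod_erase univ _ (mem_univ k)).symm
    have dy : derivative y = q + (X - C (ζ k)) * derivative q := by
      rw [hyq, derivative_mul, derivative_sub, derivative_X, derivative_C, sub_zero, one_mul]
    have ddy : derivative (derivative y)
        = 2 * derivative q + (X - C (ζ k)) * derivative (derivative q) := by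
      rw [dy, derivative_add, derivative_mul, derivative_sub, derivative_X, derivative_C,
        sub_zero, one_mul]
      ring
    have hqe : q.eval (ζ k) = ∏ j ∈ Finset.univ.erase k, (ζ k - ζ j) := by
      rw [hq, eval_prod]; simp
    have hqne : q.eval (ζ k) ≠ 0 := by
      rw [hqe, Finset.prod_ne_zero_iff]
      intro j hj
      exact sub_ne_zero.mpr fun h => (Finset.mem_erase.mp hj).1 (hζ h.symm)
    have hdq : (derivative q).eval (ζ k)
        = q.eval (ζ k) * ∑ j ∈ Finset.univ.erase k, 1 / (ζ k - ζ j) := by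
      rw [hq, deriv_prod_X_sub_C_aux, eval_finset_sum, Finset.mul_sum]
      refine Finset.sum_congr rfl fun j hj => ?_
      have hne : ζ k - ζ j ≠ 0 :=
        sub_ne_zero.mpr fun h => (Finset.mem_erase.mp hj).1 (hζ h.symm)
      have hsplit : (ζ k - ζ j) * ∏ l ∈ (Finset.univ.erase k).erase j, (ζ k - ζ l)
          = q.eval (ζ k) := by
        rw [hqe]
        exact Finset.mul_prod_erase (Finset.univ.erase k) (fun j => ζ k - ζ j) hj
      rw [eval_prod]
      simp only [eval_sub, eval_X, eval_C]
      field_simp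
      linear_combination hsplit
    have hc := hcrit k
    have hc' : A.eval (ζ k) * (2 * ∑ j ∈ Finset.univ.erase k, 1 / (ζ k - ζ j))
        + B.eval (ζ k) = 0 := by
      have hd : B.eval (ζ k) / A.eval (ζ k)
          = -(2 * ∑ j ∈ Finset.univ.erase k, 1 / (ζ k - ζ j)) := by
        linear_combination hc
      rw [div_eq_iff (hAne k)] at hd
      linear_combination hd
    have hWe : W.eval (ζ k) = q.eval (ζ k) *
        (A.eval (ζ k) * (2 * ∑ j ∈ Finset.univ.erase k, 1 / (ζ k - ζ j)) + B.eval (ζ k)) := by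
      rw [hW]
      rw [eval_add, eval_mul, eval_mul, ddy, dy]
      simp only [eval_add, eval_mul, eval_sub, eval_X, eval_C, sub_self, zero_mul, add_zero,
        eval_ofNat, hdq]
      ring
    rw [hWe, hc', mul_zero]
  have hdvd : y ∣ W := by
    refine Finset.prod_dvd_of_coprime ?_ fun k _ => dvd_iff_isRoot.mpr (hroot k)
    exact (Polynomial.pairwise_coprime_X_sub_C hζ).set_pairwise _
  obtain ⟨V, hV⟩ := hdvd
  refine ⟨V, ?_, by rw [hV]; ring⟩
  -- degree bound
  by_cases hV0 : V = 0
  · simp [hV0]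
  have hymonic : y.Monic := monic_prod_of_monic _ _ fun k _ => monic_X_sub_C _
  have hyn : y.natDegree = n := by
    rw [hy, natDegree_prod _ _ fun k _ => X_sub_C_ne_zero _]
    simp
  have hWne : W ≠ 0 := by
    rw [hV]
    exact mul_ne_zero hymonic.ne_zero hV0
  have hWnat : W.natDegree = n + V.natDegree := by
    rw [hV, natDegree_mul hymonic.ne_zero hV0, hyn]
  have hn1 : 1 ≤ n := by
    rcases Nat.eq_zero_or_pos n with h | h
    · exfalso
      apply hWne
      subst h
      rw [hW, hy]
      simp
    · exact h
  have hBn : B.natDegree ≤ p := natDegree_le_iff_degree_le.mpr hB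
  have hAn : A.natDegree = p + 1 := by
    rw [hA, natDegree_prod _ _ fun i _ => X_sub_C_ne_zero _]
    simp
  have hy'n : (derivative y).natDegree ≤ n - 1 := by
    have h := natDegree_derivative_le y
    rw [hyn] at h
    exact h
  have h1 : (B * derivative y).natDegree ≤ n + p - 1 := by
    have := natDegree_mul_le (p := B) (q := derivative y)
    omega
  have h2 : (A * derivative (derivative y)).natDegree ≤ n + p - 1 := by
    rcases Nat.lt_or_ge n 2 with h | h
    · have hn1' : n = 1 := by omega
      have hy'c : derivative y = C ((derivative y).coeff 0) :=
        Polynomial.eq_C_of_natDegree_le_zero (by omega)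
      rw [hy'c, derivative_C, mul_zero, natDegree_zero]
      omega
    · have hy''n : (derivative (derivative y)).natDegree ≤ n - 2 := by
        have := natDegree_derivative_le (derivative y)
        omega
      have := natDegree_mul_le (p := A) (q := derivative (derivative y))
      omega
  have hWd : W.natDegree ≤ n + p - 1 :=
    le_trans (natDegree_add_le _ _) (max_le h2 h1)
  have hVd : V.natDegree ≤ p - 1 := by omega
  exact natDegree_le_iff_degree_le.mp hVd
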